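/- Define k_{c,b} = (e(c,b) + e_p(c,b))/4, the number of 2-bridge knots with crossing number c and braid index b. Then k_{c,b} equals: 1 if c ≥ 3 is odd and b = 2; 2^{b−4}·C(c−b,b−2) if c ≥ 3, 3 ≤ b ≤ ⌈(c+1)/2⌉, and c+b is even; 2^{b−4}·C(c−b,b−2) + 2^{(b−5)/2}·C((c−b−1)/2,(b−3)/2) if c ≥ 3, 3 ≤ b ≤ ⌈(c+1)/2⌉, c is even and b is odd; 2^{b−4}·C(c−b,b−2) + 2^{(b−4)/2}·C((c−b−1)/2,(b−2)/2) if c ≥ 3, 3 ≤ b ≤ ⌈(c+1)/2⌉, c is odd and b is even; and 0 otherwise. -/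

import Mathlib

open Classical

/-- The number of sign changes in a finite sequence of integers. -/
def signChanges (l : List ℤ) : ℕ :=
  ((l.zip l.tail).filter (fun p => p.1 * p.2 < 0)).length

/-- The sum of the absolute values of the entries. -/
def absSum (l : List ℤ) : ℕ := (l.map Int.natAbs).sum

/-- An even continued fraction representation: a nonempty even-length
sequence of nonzero integers. -/
def IsECF (l : List ℤ) : Prop :=
  l ≠ [] ∧ Even l.length ∧ ∀ x ∈ l, x ≠ 0

/-- Palindromic or anti-palindromic sequences. -/
def IsPalOrAnti (l : List ℤ) : Prop :=
  l.reverse = l ∨ l.reverse = l.map (fun x => -x)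

/-- The set `E(c)` of even continued fractions with crossing number `c`. -/
def Ecross (c : ℕ) : Set (List ℤ) :=
  {l | IsECF l ∧ (2 * absSum l : ℤ) - signChanges l = c}

/-- The set `E(c,b)` of even continued fractions with crossing number `c`
and braid index `b`. -/
def Eset (c b : ℕ) : Set (List ℤ) :=
  {l | IsECF l ∧ (2 * absSum l : ℤ) - signChanges l = c ∧
    (absSum l : ℤ) - signChanges l + 1 = b}

noncomputable def e (c b : ℕ) : ℕ := (Eset c b).ncard

noncomputable def eTot (c : ℕ) : ℕ := (Ecross c).ncard

noncomputable def ep (c b : ℕ) : ℕ := (Eset c b ∩ {l | IsPalOrAnti l}).ncard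

noncomputable def epTot (c : ℕ) : ℕ := (Ecross c ∩ {l | IsPalOrAnti l}).ncard

/-- The number of 2-bridge knots with crossing number `c` and braid index `b`. -/
noncomputable def numKnots (c b : ℕ) : ℚ := ((e c b : ℚ) + (ep c b : ℚ)) / 4

open List


/-- Count adjacent pairs satisfying `p`. -/
def pc {α : Type*} (p : α → α → Bool) (l : List α) : ℕ :=
  ((l.zip l.tail).filter (fun q => p q.1 q.2)).length

lemma pc_nil {α : Type*} (p : α → α → Bool) : pc p [] = 0 := rfl

lemma pc_single {α : Type*} (p : α → α → Bool) (a : α) : pc p [a] = 0 := rfl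

lemma pc_cons_cons {α : Type*} (p : α → α → Bool) (a b : α) (t : List α) :
    pc p (a :: b :: t) = (if p a b then 1 else 0) + pc p (b :: t) := by
  simp only [pc, List.zip, List.tail_cons, List.zipWith_cons_cons, List.filter]
  cases h : p a b <;> simp [Nat.add_comm, List.zip]

lemma pc_cons {α : Type*} (p : α → α → Bool) (a : α) (v : List α) (hv : v ≠ []) :
    pc p (a :: v) = (if p a (v.head hv) then 1 else 0) + pc p v := by
  cases v with
  | nil => simp at hv
  | cons b t => exact pc_cons_cons p a b t

lemma pc_append {α : Type*} (p : α → α → Bool) :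
    ∀ (u v : List α) (hu : u ≠ []) (hv : v ≠ []),
    pc p (u ++ v) = pc p u + pc p v + (if p (u.getLast hu) (v.head hv) then 1 else 0)
  | [], _, hu, _ => by simp at hu
  | [a], v, _, hv => by
      simp [pc_single, pc_cons p a v hv]; exact Nat.add_comm _ _
  | a :: b :: t, v, _, hv => by
      have h1 : (b :: t) ++ v ≠ [] := by simp
      have : a :: b :: t ++ v = a :: ((b :: t) ++ v) := by simp
      rw [this, pc_cons p a _ h1]
      have hh : ((b :: t) ++ v).head h1 = b := rfl
      rw [hh, pc_append p (b :: t) v (by simp) hv, pc_cons_cons]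
      have : (a :: b :: t).getLast (by simp) = (b :: t).getLast (by simp) := by
        simp [List.getLast_cons]
      rw [this]; ring

lemma pc_reverse {α : Type*} (p : α → α → Bool) (hp : ∀ a b, p a b = p b a) :
    ∀ (l : List α), pc p l.reverse = pc p l
  | [] => rfl
  | [a] => rfl
  | a :: b :: t => by
      have h1 : (b :: t).reverse ≠ [] := by simp
      have : (a :: b :: t).reverse = (b :: t).reverse ++ [a] := by simp
      rw [this, pc_append p _ [a] h1 (by simp), pc_reverse p hp (b :: t), pc_single,
        pc_cons_cons]
      have : ((b :: t).reverse).getLast h1 = b := by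
        rw [List.getLast_reverse]
        rfl
      rw [this, List.head_cons, hp b a]
      ring

lemma pc_map {α β : Type*} (p : β → β → Bool) (f : α → β) :
    ∀ (l : List α), pc p (l.map f) = pc (fun a b => p (f a) (f b)) l
  | [] => rfl
  | [a] => rfl
  | a :: b :: t => by
      have : (a :: b :: t).map f = f a :: f b :: (t.map f) := by simp
      rw [this, pc_cons_cons]
      have : (b :: t).map f = f b :: t.map f := by simp
      rw [← this, pc_map p f (b :: t), pc_cons_cons]

lemma pc_congr {α : Type*} {p q : α → α → Bool} :
    ∀ (l : List α), (∀ a ∈ l, ∀ b ∈ l, p a b = q a b) → pc p l = pc q l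
  | [], _ => rfl
  | [a], _ => rfl
  | a :: b :: t, h => by
      rw [pc_cons_cons, pc_cons_cons, h a (by simp) b (by simp),
        pc_congr (b :: t) (fun x hx y hy => h x (by simp at hx ⊢; tauto) y (by simp at hy ⊢; tauto))]

/-- Bool lists of length `n` with `ℓ` adjacent changes. -/
def signSeqF : ℕ → ℕ → Finset (List Bool)
  | 0, _ => ∅
  | 1, 0 => {[false], [true]}
  | 1, _+1 => ∅
  | n+2, 0 => (signSeqF (n+1) 0).image (fun g => g.head! :: g)
  | n+2, ℓ+1 => (signSeqF (n+1) (ℓ+1)).image (fun g => g.head! :: g) ∪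
      (signSeqF (n+1) ℓ).image (fun g => (!g.head!) :: g)

def bc (g : List Bool) : ℕ := pc (fun a b => a != b) g

lemma mem_signSeqF : ∀ (n ℓ : ℕ) (g : List Bool),
    g ∈ signSeqF (n+1) ℓ ↔ g.length = n + 1 ∧ bc g = ℓ := by
  intro n
  induction n with
  | zero =>
    intro ℓ g
    cases ℓ with
    | zero =>
      constructor
      · intro hg
        simp only [signSeqF, Finset.mem_insert, Finset.mem_singleton] at hg
        rcases hg with rfl | rfl <;> exact ⟨rfl, rfl⟩
      · rintro ⟨hlen, _⟩
        match g, hlen with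
        | [a], _ =>
          cases a <;> simp [signSeqF]
    | succ ℓ =>
      simp only [signSeqF]
      constructor
      · intro h; simp at h
      · rintro ⟨hlen, hbc⟩
        match g, hlen with
        | [a], _ => simp [bc, pc_single] at hbc
  | succ n ih =>
    intro ℓ g
    constructor
    · intro hg
      match ℓ, hg with
      | 0, hg =>
        simp only [signSeqF, Finset.mem_image] at hg
        obtain ⟨h, hh, rfl⟩ := hg
        obtain ⟨hlen, hbc⟩ := (ih 0 h).1 hh
        cases h with
        | nil => simp at hlen
        | cons x t =>
          refine ⟨by simp at hlen ⊢; omega, ?_⟩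
          rw [List.head!_cons, bc, pc_cons_cons]
          simp only [bne_self_eq_false, if_false, Bool.false_eq_true, Nat.zero_add]
          exact hbc
      | ℓ+1, hg =>
        simp only [signSeqF, Finset.mem_union, Finset.mem_image] at hg
        rcases hg with ⟨h, hh, rfl⟩ | ⟨h, hh, rfl⟩
        · obtain ⟨hlen, hbc⟩ := (ih (ℓ+1) h).1 hh
          cases h with
          | nil => simp at hlen
          | cons x t =>
            refine ⟨by simp at hlen ⊢; omega, ?_⟩
            rw [List.head!_cons, bc, pc_cons_cons]
            simp only [bne_self_eq_false, if_false, Bool.false_eq_true, Nat.zero_add]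
            exact hbc
        · obtain ⟨hlen, hbc⟩ := (ih ℓ h).1 hh
          cases h with
          | nil => simp at hlen
          | cons x t =>
            refine ⟨by simp at hlen ⊢; omega, ?_⟩
            rw [List.head!_cons, bc, pc_cons_cons]
            have : ((!x) != x) = true := by cases x <;> rfl
            rw [this, if_pos rfl]
            have : pc (fun a b => a != b) (x :: t) = ℓ := hbc
            omega
    · rintro ⟨hlen, hbc⟩
      match g, hlen with
      | a :: b :: t, hlen =>
        have hlen' : (b :: t).length = n + 1 := by simp at hlen ⊢; omega
        rw [bc, pc_cons_cons] at hbc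
        by_cases hab : a = b
        · subst hab
          simp only [bne_self_eq_false, Bool.false_eq_true, if_false, Nat.zero_add] at hbc
          have hmem : (a :: t) ∈ signSeqF (n+1) ℓ := (ih ℓ _).2 ⟨hlen', hbc⟩
          cases ℓ with
          | zero =>
            simp only [signSeqF, Finset.mem_image]
            exact ⟨a :: t, hmem, by simp⟩
          | succ ℓ =>
            simp only [signSeqF, Finset.mem_union, Finset.mem_image]
            exact Or.inl ⟨a :: t, hmem, by simp⟩
        · have hab' : (a != b) = true := by cases a <;> cases b <;> simp_all
          rw [hab', if_pos rfl] at hbc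
          cases ℓ with
          | zero => omega
          | succ ℓ =>
            have hbc' : bc (b :: t) = ℓ := by rw [bc]; omega
            have hmem : (b :: t) ∈ signSeqF (n+1) ℓ := (ih ℓ _).2 ⟨hlen', hbc'⟩
            simp only [signSeqF, Finset.mem_union, Finset.mem_image]
            refine Or.inr ⟨b :: t, hmem, ?_⟩
            have : a = !b := by cases a <;> cases b <;> simp_all
            simp [this]

lemma card_signSeqF : ∀ (n ℓ : ℕ), (signSeqF (n+1) ℓ).card = 2 * Nat.choose n ℓ := by
  intro n
  induction n with
  | zero =>
    intro ℓ
    match ℓ with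
    | 0 => simp [signSeqF]
    | ℓ+1 => simp [signSeqF]
  | succ n ih =>
    intro ℓ
    have hinj1 : Function.Injective (fun g : List Bool => g.head! :: g) := by
      intro x y h
      exact (List.cons.injEq _ _ _ _ ▸ h).2
    have hinj2 : Function.Injective (fun g : List Bool => (!g.head!) :: g) := by
      intro x y h
      exact (List.cons.injEq _ _ _ _ ▸ h).2
    match ℓ with
    | 0 =>
      show ((signSeqF (n+1) 0).image _).card = _
      rw [Finset.card_image_of_injective _ hinj1, ih 0]
      simp
    | ℓ+1 =>
      show ((signSeqF (n+1) (ℓ+1)).image _ ∪ (signSeqF (n+1) ℓ).image _).card = _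
      rw [Finset.card_union_of_disjoint, Finset.card_image_of_injective _ hinj1,
        Finset.card_image_of_injective _ hinj2, ih, ih, Nat.choose_succ_succ' n ℓ]
      · ring
      · rw [Finset.disjoint_left]
        rintro x hx hy
        simp only [Finset.mem_image] at hx hy
        obtain ⟨g1, hg1, he1⟩ := hx
        obtain ⟨g2, hg2, he2⟩ := hy
        rw [← he2] at he1
        have ha : g1.head! = !g2.head! := (List.cons.injEq _ _ _ _ ▸ he1).1
        have hg : g1 = g2 := (List.cons.injEq _ _ _ _ ▸ he1).2
        rw [hg] at ha
        simp at ha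

/-- Lists of `n` positive naturals summing to `S`. -/
def compF : ℕ → ℕ → Finset (List ℕ)
  | 0, 0 => {([] : List ℕ)}
  | 0, _+1 => ∅
  | _+1, 0 => ∅
  | n+1, S+1 => (compF n S).image (fun h => 1 :: h) ∪
      (compF (n+1) S).image (fun h => (h.head! + 1) :: h.tail)
  termination_by n S => S + n

lemma mem_compF : ∀ (S n : ℕ) (h : List ℕ),
    h ∈ compF n S ↔ h.length = n ∧ (∀ x ∈ h, x ≠ 0) ∧ h.sum = S := by
  intro S
  induction S with
  | zero =>
    intro n h
    match n with
    | 0 =>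
      rw [compF]
      simp only [Finset.mem_singleton]
      constructor
      · rintro rfl; simp
      · rintro ⟨hlen, _, _⟩; exact List.length_eq_zero_iff.1 hlen
    | n+1 =>
      rw [compF]
      simp only [Finset.notMem_empty, false_iff]
      rintro ⟨hlen, hpos, hsum⟩
      match h, hlen with
      | a :: t, _ =>
        have : a ≠ 0 := hpos a (by simp)
        simp at hsum
        omega
  | succ S ih =>
    intro n h
    match n with
    | 0 =>
      rw [compF]
      simp only [Finset.notMem_empty, false_iff]
      rintro ⟨hlen, hpos, hsum⟩
      rw [List.length_eq_zero_iff.1 hlen] at hsum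
      simp at hsum
    | n+1 =>
      rw [compF, Finset.mem_union, Finset.mem_image, Finset.mem_image]
      constructor
      · rintro (⟨g, hg, rfl⟩ | ⟨g, hg, rfl⟩)
        · obtain ⟨hlen, hpos, hsum⟩ := (ih n g).1 hg
          refine ⟨by simp [hlen], ?_, by simp [hsum, Nat.add_comm]⟩
          intro x hx
          simp at hx
          rcases hx with rfl | hx
          · exact one_ne_zero
          · exact hpos x hx
        · obtain ⟨hlen, hpos, hsum⟩ := (ih (n+1) g).1 hg
          match g, hlen with
          | a :: t, hlen =>
            refine ⟨by simp at hlen ⊢; omega, ?_, ?_⟩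
            · intro x hx
              simp at hx
              rcases hx with rfl | hx
              · exact Nat.succ_ne_zero _
              · exact hpos x (by simp [hx])
            · simp at hsum ⊢
              omega
      · rintro ⟨hlen, hpos, hsum⟩
        match h, hlen with
        | a :: t, hlen =>
          have ha : a ≠ 0 := hpos a (by simp)
          match a, ha, hpos with
          | 1, _, hpos =>
            refine Or.inl ⟨t, (ih n t).2 ⟨by simpa using hlen, fun x hx => hpos x (by simp [hx]), by simp at hsum; omega⟩, rfl⟩
          | a+2, _, hpos =>
            refine Or.inr ⟨(a+1) :: t, (ih (n+1) _).2 ⟨by simpa using hlen, ?_, ?_⟩, by simp⟩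
            · intro x hx
              simp at hx
              rcases hx with rfl | hx
              · exact Nat.succ_ne_zero _
              · exact hpos x (by simp [hx])
            · simp at hsum ⊢
              omega
          | 0, _, hpos =>
            exact absurd rfl (hpos 0 (by simp))

lemma compF_ne_nil {n S : ℕ} {h : List ℕ} (hh : h ∈ compF (n+1) S) : h ≠ [] := by
  intro e
  have := (mem_compF S (n+1) h).1 hh
  rw [e] at this
  simp at this

lemma card_compF : ∀ (S n : ℕ), (compF (n+1) (S+1)).card = Nat.choose S n := by
  intro S
  induction S with
  | zero =>
    intro n
    rw [compF]
    match n with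
    | 0 =>
      rw [compF, compF]
      simp
    | n+1 =>
      rw [compF, compF]
      simp
  | succ S ih =>
    intro n
    rw [compF]
    have hinj1 : Function.Injective (fun h : List ℕ => 1 :: h) := by
      intro x y h
      exact (List.cons.injEq _ _ _ _ ▸ h).2
    have hinj2 : Set.InjOn (fun h : List ℕ => (h.head! + 1) :: h.tail) (compF (n+1) (S+1)) := by
      intro x hx y hy hxy
      have hx' : x ≠ [] := compF_ne_nil hx
      have hy' : y ≠ [] := compF_ne_nil hy
      simp only at hxy
      have h1 : x.head! = y.head! := by
        have := (List.cons.injEq _ _ _ _ ▸ hxy).1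
        omega
      have h2 : x.tail = y.tail := (List.cons.injEq _ _ _ _ ▸ hxy).2
      rw [← List.cons_head!_tail hx', ← List.cons_head!_tail hy', h1, h2]
    rw [Finset.card_union_of_disjoint, Finset.card_image_of_injective _ hinj1,
      Finset.card_image_of_injOn hinj2]
    · match n with
      | 0 =>
        have h0 : (compF 0 (S+1)).card = 0 := by rw [compF]; simp
        rw [h0, ih 0]
        simp
      | n+1 =>
        rw [ih n, ih (n+1), Nat.choose_succ_succ' S n]
    · rw [Finset.disjoint_left]
      rintro x hx hy
      simp only [Finset.mem_image] at hx hy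
      obtain ⟨g1, hg1, he1⟩ := hx
      obtain ⟨g2, hg2, he2⟩ := hy
      rw [← he2] at he1
      have h1 : g2.head! ≠ 0 := by
        have hm := (mem_compF (S+1) (n+1) g2).1 hg2
        have hne : g2 ≠ [] := compF_ne_nil hg2
        match g2, hne with
        | a :: t, _ => exact hm.2.1 a (by simp)
      have := (List.cons.injEq _ _ _ _ ▸ he1).1
      omega

def zs (g : List Bool) (h : List ℕ) : List ℤ :=
  List.zipWith (fun s k => if s then (k : ℤ) else -(k : ℤ)) g h

lemma signChanges_eq_pc (l : List ℤ) :
    signChanges l = pc (fun x y => decide (x * y < 0)) l := rfl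

lemma sign_mul_helper {a b : ℤ} (ha : a ≠ 0) (hb : b ≠ 0) :
    (decide (0 < a) != decide (0 < b)) = decide (a * b < 0) := by
  rcases ha.lt_or_gt with h1 | h1 <;> rcases hb.lt_or_gt with h2 | h2
  · rw [decide_eq_false (by omega : ¬ 0 < a), decide_eq_false (by omega : ¬ 0 < b),
      decide_eq_false (not_lt.2 (mul_pos_of_neg_of_neg h1 h2).le)]
    rfl
  · rw [decide_eq_false (by omega : ¬ 0 < a), decide_eq_true h2,
      decide_eq_true (mul_neg_of_neg_of_pos h1 h2)]
    rfl
  · rw [decide_eq_true h1, decide_eq_false (by omega : ¬ 0 < b),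
      decide_eq_true (mul_neg_of_pos_of_neg h1 h2)]
    rfl
  · rw [decide_eq_true h1, decide_eq_true h2,
      decide_eq_false (not_lt.2 (mul_pos h1 h2).le)]
    rfl

/-- For a list with nonzero entries, sign changes equal bool changes of the sign list. -/
lemma bc_map_sign (l : List ℤ) (hl : ∀ x ∈ l, x ≠ 0) :
    bc (l.map (fun x => decide (0 < x))) = signChanges l := by
  rw [signChanges_eq_pc, bc, pc_map]
  exact pc_congr l (fun a ha b hb => sign_mul_helper (hl a ha) (hl b hb))

lemma zs_maps : ∀ (g : List Bool) (h : List ℕ), g.length = h.length → (∀ k ∈ h, k ≠ 0) →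
    (zs g h).map (fun x => decide (0 < x)) = g ∧ (zs g h).map Int.natAbs = h
  | [], [], _, _ => ⟨rfl, rfl⟩
  | s :: g, k :: h, hlen, hpos => by
      have hk : k ≠ 0 := hpos k (by simp)
      obtain ⟨ih1, ih2⟩ := zs_maps g h (by simpa using hlen) (fun x hx => hpos x (by simp [hx]))
      constructor
      · show (decide (0 < if s then (k:ℤ) else -(k:ℤ))) :: (zs g h).map (fun x => decide (0 < x)) = s :: g
        rw [ih1]
        congr 1
        cases s
        · simp only [if_false, Bool.false_eq_true]
          exact decide_eq_false (by omega)
        · simp only [if_true]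
          exact decide_eq_true (by exact_mod_cast Nat.pos_of_ne_zero hk)
      · show (if s then (k:ℤ) else -(k:ℤ)).natAbs :: (zs g h).map Int.natAbs = k :: h
        rw [ih2]
        congr 1
        cases s <;> simp
lemma zs_recombine : ∀ (l : List ℤ), (∀ x ∈ l, x ≠ 0) →
    zs (l.map (fun x => decide (0 < x))) (l.map Int.natAbs) = l
  | [], _ => rfl
  | x :: l, hl => by
      show (if decide (0 < x) then ((x.natAbs : ℤ)) else -(x.natAbs : ℤ)) ::
        zs (l.map (fun x => decide (0 < x))) (l.map Int.natAbs) = x :: l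
      rw [zs_recombine l (fun y hy => hl y (by simp [hy]))]
      congr 1
      have hx : x ≠ 0 := hl x (by simp)
      rcases hx.lt_or_gt with h | h
      · rw [decide_eq_false (by omega), if_neg (by simp)]
        omega
      · rw [decide_eq_true h, if_pos rfl]
        omega

def AF (n S ℓ : ℕ) : Finset (List ℤ) :=
  ((signSeqF n ℓ) ×ˢ (compF n S)).image (fun p => zs p.1 p.2)

lemma mem_AF (n S ℓ : ℕ) (l : List ℤ) :
    l ∈ AF (n+1) S ℓ ↔
      l.length = n + 1 ∧ (∀ x ∈ l, x ≠ 0) ∧ absSum l = S ∧ signChanges l = ℓ := by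
  constructor
  · intro hl
    simp only [AF, Finset.mem_image, Finset.mem_product] at hl
    obtain ⟨⟨g, h⟩, ⟨hg, hh⟩, rfl⟩ := hl
    obtain ⟨hglen, hgbc⟩ := (mem_signSeqF n ℓ g).1 hg
    obtain ⟨hhlen, hhpos, hhsum⟩ := (mem_compF S (n+1) h).1 hh
    obtain ⟨hm1, hm2⟩ := zs_maps g h (by omega) hhpos
    have hlen : (zs g h).length = n + 1 := by
      have := congrArg List.length hm2
      simpa [hhlen] using this
    have hnz : ∀ x ∈ zs g h, x ≠ 0 := by
      intro x hx hx0
      have : x.natAbs ∈ (zs g h).map Int.natAbs := List.mem_map_of_mem hx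
      rw [hm2] at this
      exact hhpos _ this (by simp [hx0])
    refine ⟨hlen, hnz, ?_, ?_⟩
    · rw [absSum, hm2, hhsum]
    · rw [← bc_map_sign _ hnz, hm1, hgbc]
  · rintro ⟨hlen, hnz, hsum, hsc⟩
    simp only [AF, Finset.mem_image, Finset.mem_product]
    refine ⟨⟨l.map (fun x => decide (0 < x)), l.map Int.natAbs⟩, ⟨?_, ?_⟩, zs_recombine l hnz⟩
    · exact (mem_signSeqF n ℓ _).2 ⟨by simp [hlen], by rw [bc_map_sign _ hnz, hsc]⟩
    · refine (mem_compF S (n+1) _).2 ⟨by simp [hlen], ?_, by rw [← absSum, hsum]⟩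
      intro x hx
      simp only [List.mem_map] at hx
      obtain ⟨y, hy, rfl⟩ := hx
      simpa using hnz y hy
lemma card_AF (n S ℓ : ℕ) : (AF (n+1) (S+1) ℓ).card = 2 * Nat.choose n ℓ * Nat.choose S n := by
  rw [AF, Finset.card_image_of_injOn, Finset.card_product, card_signSeqF, card_compF]
  intro p hp q hq hpq
  simp only [Finset.mem_coe, Finset.mem_product] at hp hq
  obtain ⟨hp1, hp2⟩ := hp
  obtain ⟨hq1, hq2⟩ := hq
  obtain ⟨hp1l, _⟩ := (mem_signSeqF n ℓ p.1).1 hp1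
  obtain ⟨hp2l, hp2pos, _⟩ := (mem_compF (S+1) (n+1) p.2).1 hp2
  obtain ⟨hq1l, _⟩ := (mem_signSeqF n ℓ q.1).1 hq1
  obtain ⟨hq2l, hq2pos, _⟩ := (mem_compF (S+1) (n+1) q.2).1 hq2
  obtain ⟨hpm1, hpm2⟩ := zs_maps p.1 p.2 (by omega) hp2pos
  obtain ⟨hqm1, hqm2⟩ := zs_maps q.1 q.2 (by omega) hq2pos
  have hpq' : zs p.1 p.2 = zs q.1 q.2 := hpq
  have h1 : p.1 = q.1 := by rw [← hpm1, ← hqm1, hpq']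
  have h2 : p.2 = q.2 := by rw [← hpm2, ← hqm2, hpq']
  exact Prod.ext h1 h2


lemma sum_choose_parity (M : ℕ) (hM : 1 ≤ M) (p : ℕ → Prop) [DecidablePred p]
    (hp : ∀ i, p i ↔ Even i) :
    (((Finset.range (M+1)).filter p).sum (fun i => Nat.choose M i) = 2^(M-1)) ∧
    (((Finset.range (M+1)).filter (fun i => ¬ p i)).sum (fun i => Nat.choose M i) = 2^(M-1)) := by
  set A := ((Finset.range (M+1)).filter p).sum (fun i => Nat.choose M i) with hA
  set B := ((Finset.range (M+1)).filter (fun i => ¬ p i)).sum (fun i => Nat.choose M i) with hB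
  have h1 : A + B = 2^M := by
    rw [hA, hB, Finset.sum_filter_add_sum_filter_not, Nat.sum_range_choose]
  have h2 : (A : ℤ) = (B : ℤ) := by
    have halt := Int.alternating_sum_range_choose_of_ne (n := M) (by omega)
    rw [← Finset.sum_filter_add_sum_filter_not (Finset.range (M+1)) p] at halt
    have he : ((Finset.range (M+1)).filter p).sum (fun i => (-1)^i * (Nat.choose M i : ℤ)) = (A : ℤ) := by
      rw [hA, Nat.cast_sum]
      refine Finset.sum_congr rfl ?_
      intro i hi
      rw [Finset.mem_filter] at hi
      rw [((hp i).1 hi.2).neg_one_pow, one_mul]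
    have ho : ((Finset.range (M+1)).filter (fun i => ¬ p i)).sum
        (fun i => (-1)^i * (Nat.choose M i : ℤ)) = -(B : ℤ) := by
      rw [hB, Nat.cast_sum, ← Finset.sum_neg_distrib]
      refine Finset.sum_congr rfl ?_
      intro i hi
      rw [Finset.mem_filter] at hi
      have : Odd i := Nat.not_even_iff_odd.1 (fun h => hi.2 ((hp i).2 h))
      rw [this.neg_one_pow]
      ring
    rw [he, ho] at halt
    omega
  have h3 : A = B := by exact_mod_cast h2
  have h4 : 2^M = 2 * 2^(M-1) := by
    rw [← pow_succ']
    congr 1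
    omega
  omega


lemma sum_image_two_mul_add_one (f : ℕ → ℕ) (N : ℕ) :
    (Finset.range (N+1)).sum (fun m => f (2*m+1)) =
      ((Finset.range (2*N+2)).filter (fun j => ¬ Even j)).sum f := by
  have himg : (Finset.range (N+1)).image (fun m => 2*m+1) = (Finset.range (2*N+2)).filter (fun j => ¬ Even j) := by
    ext j
    simp only [Finset.mem_image, Finset.mem_filter, Finset.mem_range, Nat.even_iff]
    constructor
    · rintro ⟨m, hm, rfl⟩
      omega
    · rintro ⟨hj, hodd⟩
      exact ⟨j/2, by omega, by omega⟩
  rw [← himg, Finset.sum_image]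
  intro x _ y _ h
  simp only at h
  omega


/-- drop terms with `C(N,j) = 0` -/
lemma sum_drop_high (f : ℕ → ℕ → ℕ) (N K : ℕ) (hK : N ≤ K) (p : ℕ → Prop) [DecidablePred p]
    (hf : ∀ j, N < j → f N j = 0) :
    ((Finset.range (K+1)).filter p).sum (fun j => f N j) =
      ((Finset.range (N+1)).filter p).sum (fun j => f N j) := by
  symm
  apply Finset.sum_subset
  · apply Finset.filter_subset_filter
    intro x hx
    rw [Finset.mem_range] at hx ⊢
    omega
  · intro x hx hx'
    rw [Finset.mem_filter, Finset.mem_range] at hx hx'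
    apply hf
    by_contra h
    exact hx' ⟨by omega, hx.2⟩


lemma sum_trinomial (N ℓ : ℕ) (hl : ℓ ≤ N) (p : ℕ → Prop) [DecidablePred p] :
    ((Finset.range (N+1)).filter p).sum (fun j => Nat.choose N j * Nat.choose j ℓ) =
      Nat.choose N ℓ *
        ((Finset.range (N - ℓ + 1)).filter (fun i => p (i + ℓ))).sum (fun i => Nat.choose (N-ℓ) i) := by
  rw [Finset.mul_sum]
  rw [show ((Finset.range (N+1)).filter p).sum (fun j => Nat.choose N j * Nat.choose j ℓ)
      = ((Finset.range (N+1)).filter (fun j => p j ∧ ℓ ≤ j)).sum (fun j => Nat.choose N j * Nat.choose j ℓ) from ?_]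
  · apply Finset.sum_nbij' (fun j => j - ℓ) (fun i => i + ℓ)
    · intro j hj
      simp only [Finset.mem_filter, Finset.mem_range] at hj ⊢
      refine ⟨by omega, ?_⟩
      rw [show j - ℓ + ℓ = j from by omega]
      exact hj.2.1
    · intro i hi
      simp only [Finset.mem_filter, Finset.mem_range] at hi ⊢
      exact ⟨by omega, hi.2, by omega⟩
    · intro j hj
      simp only [Finset.mem_filter, Finset.mem_range] at hj
      omega
    · intro i hi
      omega
    · intro j hj
      simp only [Finset.mem_filter, Finset.mem_range] at hj
      rw [Nat.choose_mul hj.2.2]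
  · symm
    apply Finset.sum_subset
    · intro x hx
      simp only [Finset.mem_filter] at hx ⊢
      exact ⟨hx.1, hx.2.1⟩
    · intro x hx hx'
      simp only [Finset.mem_filter, Finset.mem_range] at hx hx'
      have : x < ℓ := by
        by_contra h
        exact hx' ⟨hx.1, hx.2, by omega⟩
      rw [Nat.choose_eq_zero_of_lt this, Nat.mul_zero]

lemma length_le_absSum : ∀ (l : List ℤ), (∀ x ∈ l, x ≠ 0) → l.length ≤ absSum l
  | [], _ => le_refl _
  | x :: l, h => by
      have h1 : x.natAbs ≠ 0 := by simpa using h x (by simp)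
      have := length_le_absSum l (fun y hy => h y (by simp [hy]))
      simp only [absSum, List.map_cons, List.sum_cons, List.length_cons] at *
      omega

def EF (N ℓ : ℕ) : Finset (List ℤ) :=
  (Finset.range (N+1)).biUnion (fun m => AF (2*m+2) (N+1) ℓ)

lemma Eset_eq_EF (c b N ℓ : ℕ) (hS : c + 1 = (N+1) + b) (hl : c + 2 = ℓ + 2*b) :
    Eset c b = ↑(EF N ℓ) := by
  ext l
  simp only [Eset, Set.mem_setOf_eq, Finset.coe_biUnion, EF, Finset.mem_coe,
    Finset.mem_biUnion, Finset.mem_range, Set.mem_iUnion]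
  constructor
  · rintro ⟨⟨hne, heven, hnz⟩, h1, h2⟩
    have hA : absSum l = N + 1 ∧ signChanges l = ℓ := by
      constructor <;> omega
    obtain ⟨hA1, hA2⟩ := hA
    obtain ⟨k, hk⟩ := heven
    have hk1 : 1 ≤ k := by
      rcases Nat.eq_zero_or_pos k with h | h
      · exfalso; apply hne; rw [← List.length_eq_zero_iff]; omega
      · exact h
    have hlen : l.length ≤ N + 1 := by rw [← hA1]; exact length_le_absSum l hnz
    refine ⟨k - 1, ⟨by omega, ?_⟩⟩
    rw [show 2*(k-1)+2 = (2*(k-1)+1)+1 from rfl]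
    exact (mem_AF (2*(k-1)+1) (N+1) ℓ l).2 ⟨by omega, hnz, hA1, hA2⟩
  · rintro ⟨m, hm, hmem⟩
    rw [show 2*m+2 = (2*m+1)+1 from rfl] at hmem
    obtain ⟨hlen, hnz, hsum, hsc⟩ := (mem_AF (2*m+1) (N+1) ℓ l).1 hmem
    refine ⟨⟨?_, ⟨m+1, by omega⟩, hnz⟩, ?_, ?_⟩
    · intro h; rw [h] at hlen; simp at hlen
    · rw [hsum, hsc]; push_cast; omega
    · rw [hsum, hsc]; push_cast; omega

lemma e_eq_sum (c b N ℓ : ℕ) (hS : c + 1 = (N+1) + b) (hl : c + 2 = ℓ + 2*b) :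
    e c b = (Finset.range (N+1)).sum (fun m => 2 * Nat.choose (2*m+1) ℓ * Nat.choose N (2*m+1)) := by
  rw [e, Eset_eq_EF c b N ℓ hS hl, Set.ncard_coe_finset, EF, Finset.card_biUnion]
  · apply Finset.sum_congr rfl
    intro m _
    rw [show 2*m+2 = (2*m+1)+1 from rfl, show N+1 = N+1 from rfl, card_AF (2*m+1) N ℓ]
  · intro x _ y _ hxy
    rw [Function.onFun, Finset.disjoint_left]
    intro l hlx hly
    rw [show 2*x+2 = (2*x+1)+1 from rfl] at hlx
    rw [show 2*y+2 = (2*y+1)+1 from rfl] at hly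
    have h1 := ((mem_AF _ _ _ l).1 hlx).1
    have h2 := ((mem_AF _ _ _ l).1 hly).1
    omega

lemma sum_choose_even_pred (M : ℕ) (hM : 1 ≤ M) (p : ℕ → Prop) [DecidablePred p]
    (hp : ∀ i, p i ↔ Even i) :
    ((Finset.range (M+1)).filter p).sum (fun i => Nat.choose M i) = 2^(M-1) := by
  rw [Finset.filter_congr (fun i _ => by rw [hp i] : ∀ i ∈ Finset.range (M+1), p i ↔ Even i)]
  exact (sum_choose_parity M hM Even (fun _ => Iff.rfl)).1

lemma sum_choose_odd_pred (M : ℕ) (hM : 1 ≤ M) (p : ℕ → Prop) [DecidablePred p]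
    (hp : ∀ i, p i ↔ ¬ Even i) :
    ((Finset.range (M+1)).filter p).sum (fun i => Nat.choose M i) = 2^(M-1) := by
  rw [Finset.filter_congr (fun i _ => by rw [hp i] : ∀ i ∈ Finset.range (M+1), p i ↔ ¬ Even i)]
  exact (sum_choose_parity M hM Even (fun _ => Iff.rfl)).2

lemma e_sum_val_big (N ℓ : ℕ) (hb : ℓ + 1 ≤ N) :
    (Finset.range (N+1)).sum (fun m => 2 * Nat.choose (2*m+1) ℓ * Nat.choose N (2*m+1)) =
      2^(N-ℓ) * Nat.choose N ℓ := by
  have h0 : ∀ m, 2 * Nat.choose (2*m+1) ℓ * Nat.choose N (2*m+1)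
      = 2 * (Nat.choose N (2*m+1) * Nat.choose (2*m+1) ℓ) := by intro m; ring
  simp only [h0]
  rw [← Finset.mul_sum]
  have h1 := sum_image_two_mul_add_one (fun j => Nat.choose N j * Nat.choose j ℓ) N
  rw [h1]
  have h2 := sum_drop_high (fun N j => Nat.choose N j * Nat.choose j ℓ) N (2*N+1)
      (by omega) (fun j => ¬ Even j) (fun j hj => by show Nat.choose N j * Nat.choose j ℓ = 0; rw [Nat.choose_eq_zero_of_lt hj, Nat.zero_mul])
  rw [show 2*N+2 = (2*N+1)+1 from rfl, h2]
  rw [sum_trinomial N ℓ (by omega) (fun j => ¬ Even j)]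
  have hM : 1 ≤ N - ℓ := by omega
  rcases Nat.even_or_odd ℓ with he | ho
  · have hpp : ∀ i, ¬ Even (i + ℓ) ↔ ¬ Even i := by
      intro i; rw [Nat.even_add]; simp [he]
    rw [sum_choose_odd_pred (N-ℓ) hM (fun i => ¬ Even (i + ℓ)) hpp]
    rw [show 2^(N-ℓ) = 2*2^(N-ℓ-1) from by rw [← pow_succ']; congr 1; omega]
    ring
  · have hE : ¬ Even ℓ := Nat.not_even_iff_odd.2 ho
    have hpp : ∀ i, ¬ Even (i + ℓ) ↔ Even i := by
      intro i; rw [Nat.even_add]; simp [hE]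
    rw [sum_choose_even_pred (N-ℓ) hM (fun i => ¬ Even (i + ℓ)) hpp]
    rw [show 2^(N-ℓ) = 2*2^(N-ℓ-1) from by rw [← pow_succ']; congr 1; omega]
    ring

lemma e_sum_val_b2 (N : ℕ) :
    (Finset.range (N+1)).sum (fun m => 2 * Nat.choose (2*m+1) N * Nat.choose N (2*m+1)) =
      if Odd N then 2 else 0 := by
  rcases Nat.even_or_odd N with he | ho
  · rw [if_neg (by rw [Nat.odd_iff]; rw [Nat.even_iff] at he; omega)]
    apply Finset.sum_eq_zero
    intro m _
    rcases lt_trichotomy (2*m+1) N with h | h | h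
    · rw [Nat.choose_eq_zero_of_lt h]; ring
    · exfalso; rw [Nat.even_iff] at he; omega
    · rw [Nat.choose_eq_zero_of_lt h]; ring
  · rw [if_pos ho]
    obtain ⟨k, hk⟩ := ho
    rw [Finset.sum_eq_single_of_mem k (Finset.mem_range.2 (by omega))]
    · rw [show 2*k+1 = N from by omega, Nat.choose_self]
    · intro m _ hm
      rcases lt_trichotomy (2*m+1) N with h | h | h
      · rw [Nat.choose_eq_zero_of_lt h]; ring
      · exfalso; omega
      · rw [Nat.choose_eq_zero_of_lt h]; ring

lemma absSum_append (u v : List ℤ) : absSum (u ++ v) = absSum u + absSum v := by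
  simp [absSum]

lemma absSum_reverse (l : List ℤ) : absSum l.reverse = absSum l := by
  simp [absSum, List.map_reverse, List.sum_reverse]

lemma absSum_negmap (l : List ℤ) : absSum (l.map (fun x => -x)) = absSum l := by
  simp [absSum, List.map_map, Function.comp_def]

lemma sc_pal (h : List ℤ) (hne : h ≠ []) (hnz : h.getLast hne ≠ 0) :
    signChanges (h ++ h.reverse) = 2 * signChanges h := by
  have hrne : h.reverse ≠ [] := by simpa using hne
  rw [signChanges_eq_pc, pc_append _ h h.reverse hne hrne]
  rw [List.head_reverse hrne]
  rw [pc_reverse _ (fun a b => by rw [mul_comm]) h]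
  rw [decide_eq_false (not_lt.2 (mul_self_nonneg _)), if_neg (by simp)]
  rw [← signChanges_eq_pc]
  ring

lemma sc_anti (h : List ℤ) (hne : h ≠ []) (hnz : h.getLast hne ≠ 0) :
    signChanges (h ++ (h.reverse.map (fun x => -x))) = 2 * signChanges h + 1 := by
  have hrne : h.reverse ≠ [] := by simpa using hne
  have hmne : h.reverse.map (fun x => -x) ≠ [] := by simpa using hne
  rw [signChanges_eq_pc, pc_append _ h _ hne hmne]
  rw [pc_map, pc_congr h.reverse (fun a _ b _ => by rw [neg_mul_neg])]
  rw [pc_reverse _ (fun a b => by rw [mul_comm]) h]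
  rw [List.head_map, List.head_reverse hrne]
  have hpos : (0:ℤ) < h.getLast hne * h.getLast hne := mul_self_pos.2 hnz
  rw [decide_eq_true (by nlinarith : h.getLast hne * -(h.getLast hne) < 0), if_pos rfl]
  rw [← signChanges_eq_pc]
  ring

lemma pal_decomp {l : List ℤ} {m : ℕ} (hlen : l.length = 2*m) (hp : l.reverse = l) :
    l = l.take m ++ (l.take m).reverse := by
  conv_lhs => rw [← List.take_append_drop m l]
  congr 1
  rw [List.reverse_take, hp, hlen, show 2*m - m = m from by omega]

lemma anti_decomp {l : List ℤ} {m : ℕ} (hlen : l.length = 2*m)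
    (hp : l.reverse = l.map (fun x => -x)) :
    l = l.take m ++ ((l.take m).reverse.map (fun x => -x)) := by
  have h1 : (l.take m).reverse = (l.drop m).map (fun x => -x) := by
    rw [List.reverse_take, hp, hlen, show 2*m - m = m from by omega, ← List.map_drop]
  conv_lhs => rw [← List.take_append_drop m l]
  congr 1
  rw [h1, List.map_map]
  simp

def PF (N ℓ : ℕ) : Finset (List ℤ) :=
  (Finset.range (N+1)).biUnion (fun m => (AF (m+1) (N+1) ℓ).image (fun h => h ++ h.reverse))

def QF (N ℓ : ℕ) : Finset (List ℤ) :=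
  (Finset.range (N+1)).biUnion
    (fun m => (AF (m+1) (N+1) ℓ).image (fun h => h ++ (h.reverse.map (fun x => -x))))

lemma getLast_ne_zero {h : List ℤ} (hne : h ≠ []) (hnz : ∀ x ∈ h, x ≠ 0) :
    h.getLast hne ≠ 0 :=
  hnz _ (List.getLast_mem hne)

lemma Eset_pal_eq (c b N ℓ : ℕ) (hS : c + 1 = 2*(N+1) + b) (hl : c + 2 = 2*ℓ + 2*b) :
    Eset c b ∩ {l | IsPalOrAnti l} = ↑(PF N ℓ) := by
  ext l
  simp only [Eset, Set.mem_inter_iff, Set.mem_setOf_eq, PF, Finset.coe_biUnion, Finset.mem_coe,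
    Finset.mem_biUnion, Finset.mem_range, Set.mem_iUnion, Finset.mem_image]
  constructor
  · rintro ⟨⟨⟨hne, heven, hnz⟩, h1, h2⟩, hpal⟩
    have hA1 : absSum l = 2*(N+1) := by omega
    have hA2 : signChanges l = 2*ℓ := by omega
    obtain ⟨k, hk⟩ := heven
    have hk1 : 1 ≤ k := by
      rcases Nat.eq_zero_or_pos k with h | h
      · exfalso; apply hne; rw [← List.length_eq_zero_iff]; omega
      · exact h
    set h := l.take k with hh
    have hhlen : h.length = k := by rw [hh, List.length_take]; omega
    have hhne : h ≠ [] := by rw [← List.length_pos_iff]; omega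
    have hhnz : ∀ x ∈ h, x ≠ 0 := fun x hx => hnz x (List.take_subset k l hx)
    have hglast : h.getLast hhne ≠ 0 := getLast_ne_zero hhne hhnz
    rcases hpal with hp | hp
    · have hdec : l = h ++ h.reverse := pal_decomp (by omega) hp
      have hsum : absSum h = N + 1 := by
        have := hdec ▸ hA1
        rw [absSum_append, absSum_reverse] at this
        omega
      have hsc : signChanges h = ℓ := by
        have := hdec ▸ hA2
        rw [sc_pal h hhne hglast] at this
        omega
      have hkb : k ≤ N + 1 := by
        have := length_le_absSum h hhnz
        omega
      refine ⟨k-1, by omega, h, ?_, hdec.symm⟩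
      exact (mem_AF (k-1) (N+1) ℓ h).2 ⟨by omega, hhnz, hsum, hsc⟩
    · exfalso
      have hdec : l = h ++ (h.reverse.map (fun x => -x)) := anti_decomp (by omega) hp
      have := hdec ▸ hA2
      rw [sc_anti h hhne hglast] at this
      omega
  · rintro ⟨m, hm, g, hg, rfl⟩
    obtain ⟨hglen, hgnz, hgsum, hgsc⟩ := (mem_AF m (N+1) ℓ g).1 hg
    have hgne : g ≠ [] := by rw [← List.length_pos_iff]; omega
    have hglast : g.getLast hgne ≠ 0 := getLast_ne_zero hgne hgnz
    have hsum : absSum (g ++ g.reverse) = 2*(N+1) := by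
      rw [absSum_append, absSum_reverse, hgsum]; ring
    have hsc : signChanges (g ++ g.reverse) = 2*ℓ := by
      rw [sc_pal g hgne hglast, hgsc]
    refine ⟨⟨⟨by simp [hgne], ?_, ?_⟩, ?_, ?_⟩, ?_⟩
    · refine ⟨m+1, ?_⟩
      simp only [List.length_append, List.length_reverse, List.length_map, hglen]
    · intro x hx
      rcases List.mem_append.1 hx with h | h
      · exact hgnz x h
      · exact hgnz x (List.mem_reverse.1 h)
    · rw [hsum, hsc]; push_cast; omega
    · rw [hsum, hsc]; push_cast; omega
    · left
      rw [List.reverse_append, List.reverse_reverse]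

lemma Eset_anti_eq (c b N ℓ : ℕ) (hS : c + 1 = 2*(N+1) + b) (hl : c + 2 = (2*ℓ+1) + 2*b) :
    Eset c b ∩ {l | IsPalOrAnti l} = ↑(QF N ℓ) := by
  ext l
  simp only [Eset, Set.mem_inter_iff, Set.mem_setOf_eq, QF, Finset.coe_biUnion, Finset.mem_coe,
    Finset.mem_biUnion, Finset.mem_range, Set.mem_iUnion, Finset.mem_image]
  constructor
  · rintro ⟨⟨⟨hne, heven, hnz⟩, h1, h2⟩, hpal⟩
    have hA1 : absSum l = 2*(N+1) := by omega
    have hA2 : signChanges l = 2*ℓ+1 := by omega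
    obtain ⟨k, hk⟩ := heven
    have hk1 : 1 ≤ k := by
      rcases Nat.eq_zero_or_pos k with h | h
      · exfalso; apply hne; rw [← List.length_eq_zero_iff]; omega
      · exact h
    set h := l.take k with hh
    have hhlen : h.length = k := by rw [hh, List.length_take]; omega
    have hhne : h ≠ [] := by rw [← List.length_pos_iff]; omega
    have hhnz : ∀ x ∈ h, x ≠ 0 := fun x hx => hnz x (List.take_subset k l hx)
    have hglast : h.getLast hhne ≠ 0 := getLast_ne_zero hhne hhnz
    rcases hpal with hp | hp
    · exfalso
      have hdec : l = h ++ h.reverse := pal_decomp (by omega) hp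
      have := hdec ▸ hA2
      rw [sc_pal h hhne hglast] at this
      omega
    · have hdec : l = h ++ (h.reverse.map (fun x => -x)) := anti_decomp (by omega) hp
      have hsum : absSum h = N + 1 := by
        have := hdec ▸ hA1
        rw [absSum_append, absSum_negmap, absSum_reverse] at this
        omega
      have hsc : signChanges h = ℓ := by
        have := hdec ▸ hA2
        rw [sc_anti h hhne hglast] at this
        omega
      have hkb : k ≤ N + 1 := by
        have := length_le_absSum h hhnz
        omega
      refine ⟨k-1, by omega, h, ?_, hdec.symm⟩
      exact (mem_AF (k-1) (N+1) ℓ h).2 ⟨by omega, hhnz, hsum, hsc⟩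
  · rintro ⟨m, hm, g, hg, rfl⟩
    obtain ⟨hglen, hgnz, hgsum, hgsc⟩ := (mem_AF m (N+1) ℓ g).1 hg
    have hgne : g ≠ [] := by rw [← List.length_pos_iff]; omega
    have hglast : g.getLast hgne ≠ 0 := getLast_ne_zero hgne hgnz
    have hsum : absSum (g ++ (g.reverse.map (fun x => -x))) = 2*(N+1) := by
      rw [absSum_append, absSum_negmap, absSum_reverse, hgsum]; ring
    have hsc : signChanges (g ++ (g.reverse.map (fun x => -x))) = 2*ℓ+1 := by
      rw [sc_anti g hgne hglast, hgsc]
    refine ⟨⟨⟨by simp [hgne], ?_, ?_⟩, ?_, ?_⟩, ?_⟩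
    · refine ⟨m+1, ?_⟩
      simp only [List.length_append, List.length_reverse, List.length_map, hglen]
    · intro x hx
      rcases List.mem_append.1 hx with h | h
      · exact hgnz x h
      · have : x ∈ g.reverse.map (fun y : ℤ => -y) := h
        simp only [List.mem_map, List.mem_reverse] at this
        obtain ⟨y, hy, rfl⟩ := this
        simpa using hgnz y hy
    · rw [hsum, hsc]; push_cast; omega
    · rw [hsum, hsc]; push_cast; omega
    · right
      rw [List.reverse_append, ← List.map_reverse, List.reverse_reverse, List.map_append,
        List.map_map]
      simp

lemma Eset_pal_empty (c b N ℓ : ℕ) (hS : c + 1 = (N+1) + b) (hl : c + 2 = ℓ + 2*b)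
    (hodd : ¬ Even (N+1)) :
    Eset c b ∩ {l | IsPalOrAnti l} = ∅ := by
  ext l
  simp only [Eset, Set.mem_inter_iff, Set.mem_setOf_eq, Set.mem_empty_iff_false, iff_false]
  rintro ⟨⟨⟨hne, heven, hnz⟩, h1, h2⟩, hpal⟩
  have hA1 : absSum l = N+1 := by omega
  obtain ⟨k, hk⟩ := heven
  have hk1 : 1 ≤ k := by
    rcases Nat.eq_zero_or_pos k with h | h
    · exfalso; apply hne; rw [← List.length_eq_zero_iff]; omega
    · exact h
  apply hodd
  rcases hpal with hp | hp
  · have hdec : l = l.take k ++ (l.take k).reverse := pal_decomp (by omega) hp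
    have := hdec ▸ hA1
    rw [absSum_append, absSum_reverse] at this
    exact ⟨absSum (l.take k), by omega⟩
  · have hdec : l = l.take k ++ ((l.take k).reverse.map (fun x => -x)) := anti_decomp (by omega) hp
    have := hdec ▸ hA1
    rw [absSum_append, absSum_negmap, absSum_reverse] at this
    exact ⟨absSum (l.take k), by omega⟩

lemma sc_lt_length (l : List ℤ) (hne : l ≠ []) : signChanges l < l.length := by
  have h1 : signChanges l ≤ (l.zip l.tail).length := List.length_filter_le _ _
  rw [List.length_zip] at h1
  have h2 : l.tail.length = l.length - 1 := List.length_tail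
  have h3 : 1 ≤ l.length := by
    rw [Nat.one_le_iff_ne_zero]
    simpa [List.length_eq_zero_iff] using hne
  omega

lemma Eset_facts {c b : ℕ} {l : List ℤ} (hl : l ∈ Eset c b) :
    3 ≤ c ∧ 2 ≤ b ∧ 2*b ≤ c + 2 := by
  obtain ⟨⟨hne, heven, hnz⟩, h1, h2⟩ := hl
  have hlen := length_le_absSum l hnz
  have hsc := sc_lt_length l hne
  have hlen2 : 2 ≤ l.length := by
    obtain ⟨k, hk⟩ := heven
    rcases Nat.eq_zero_or_pos k with h | h
    · exfalso; apply hne; rw [← List.length_eq_zero_iff]; omega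
    · omega
  constructor
  · omega
  constructor
  · omega
  · omega

lemma Eset_empty {c b : ℕ} (h : b ≤ 1 ∨ c + 3 ≤ 2*b ∨ c ≤ 2) : Eset c b = ∅ := by
  ext l
  simp only [Set.mem_empty_iff_false, iff_false]
  intro hl
  have := Eset_facts hl
  omega

lemma ep_eq_sum_pal (c b N ℓ : ℕ) (hS : c + 1 = 2*(N+1) + b) (hl : c + 2 = 2*ℓ + 2*b) :
    ep c b = (Finset.range (N+1)).sum (fun m => 2 * Nat.choose m ℓ * Nat.choose N m) := by
  rw [ep, Eset_pal_eq c b N ℓ hS hl, Set.ncard_coe_finset, PF, Finset.card_biUnion]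
  · apply Finset.sum_congr rfl
    intro m _
    rw [Finset.card_image_of_injOn, card_AF m N ℓ]
    intro x hx y hy hxy
    simp only [Finset.mem_coe] at hx hy
    have hx1 : x.length = m+1 := ((mem_AF m (N+1) ℓ x).1 hx).1
    have hy1 : y.length = m+1 := ((mem_AF m (N+1) ℓ y).1 hy).1
    simp only at hxy
    have := congrArg (List.take (m+1)) hxy
    rwa [List.take_left' hx1, List.take_left' hy1] at this
  · intro x _ y _ hxy
    rw [Function.onFun, Finset.disjoint_left]
    intro l hlx hly
    simp only [Finset.mem_image] at hlx hly
    obtain ⟨g1, hg1, he1⟩ := hlx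
    obtain ⟨g2, hg2, he2⟩ := hly
    have h1 : g1.length = x+1 := ((mem_AF x (N+1) ℓ g1).1 hg1).1
    have h2 : g2.length = y+1 := ((mem_AF y (N+1) ℓ g2).1 hg2).1
    have e1 := congrArg List.length he1
    have e2 := congrArg List.length he2
    simp only [List.length_append, List.length_reverse] at e1 e2
    omega

lemma ep_eq_sum_anti (c b N ℓ : ℕ) (hS : c + 1 = 2*(N+1) + b) (hl : c + 2 = (2*ℓ+1) + 2*b) :
    ep c b = (Finset.range (N+1)).sum (fun m => 2 * Nat.choose m ℓ * Nat.choose N m) := by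
  rw [ep, Eset_anti_eq c b N ℓ hS hl, Set.ncard_coe_finset, QF, Finset.card_biUnion]
  · apply Finset.sum_congr rfl
    intro m _
    rw [Finset.card_image_of_injOn, card_AF m N ℓ]
    intro x hx y hy hxy
    simp only [Finset.mem_coe] at hx hy
    have hx1 : x.length = m+1 := ((mem_AF m (N+1) ℓ x).1 hx).1
    have hy1 : y.length = m+1 := ((mem_AF m (N+1) ℓ y).1 hy).1
    simp only at hxy
    have := congrArg (List.take (m+1)) hxy
    rwa [List.take_left' hx1, List.take_left' hy1] at this
  · intro x _ y _ hxy
    rw [Function.onFun, Finset.disjoint_left]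
    intro l hlx hly
    simp only [Finset.mem_image] at hlx hly
    obtain ⟨g1, hg1, he1⟩ := hlx
    obtain ⟨g2, hg2, he2⟩ := hly
    have h1 : g1.length = x+1 := ((mem_AF x (N+1) ℓ g1).1 hg1).1
    have h2 : g2.length = y+1 := ((mem_AF y (N+1) ℓ g2).1 hg2).1
    have e1 := congrArg List.length he1
    have e2 := congrArg List.length he2
    simp only [List.length_append, List.length_reverse, List.length_map] at e1 e2
    omega

lemma ep_sum_val (N ℓ : ℕ) :
    (Finset.range (N+1)).sum (fun m => 2 * Nat.choose m ℓ * Nat.choose N m) =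
      2 * 2^(N-ℓ) * Nat.choose N ℓ := by
  have h0 : ∀ m, 2 * Nat.choose m ℓ * Nat.choose N m
      = 2 * (Nat.choose N m * Nat.choose m ℓ) := by intro m; ring
  simp only [h0]
  rw [← Finset.mul_sum]
  rcases le_or_gt ℓ N with hl | hl
  · rw [← Finset.filter_true (Finset.range (N+1)), sum_trinomial N ℓ hl (fun _ => True)]
    have : Finset.filter (fun i => (fun _ => True) (i + ℓ)) (Finset.range (N-ℓ+1)) =
        Finset.range (N-ℓ+1) := by
      apply Finset.filter_true_of_mem
      intro _ _
      trivial
    rw [this, Nat.sum_range_choose]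
    ring
  · rw [Nat.choose_eq_zero_of_lt hl, Finset.sum_eq_zero]
    · ring
    · intro m hm
      rw [Finset.mem_range] at hm
      rw [Nat.choose_eq_zero_of_lt (show m < ℓ from by omega), Nat.mul_zero]

lemma e_val_b2 (c : ℕ) (hc : 3 ≤ c) : e c 2 = if Odd (c-2) then 2 else 0 := by
  rw [e_eq_sum c 2 (c-2) (c-2) (by omega) (by omega), e_sum_val_b2]

lemma e_val_main (c b : ℕ) (hb3 : 3 ≤ b) (hb : 2*b ≤ c+2) :
    e c b = 2^(b-2) * Nat.choose (c-b) (b-2) := by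
  rw [e_eq_sum c b (c-b) (c+2-2*b) (by omega) (by omega),
    e_sum_val_big (c-b) (c+2-2*b) (by omega),
    show (c-b) - (c+2-2*b) = b-2 from by omega,
    show c+2-2*b = (c-b) - (b-2) from by omega,
    Nat.choose_symm (by omega)]

lemma ep_val_case1 (c : ℕ) (hc : 3 ≤ c) (hodd : c % 2 = 1) : ep c 2 = 2 := by
  rw [ep_eq_sum_anti c 2 ((c-3)/2) ((c-3)/2) (by omega) (by omega), ep_sum_val,
    Nat.sub_self, pow_zero, Nat.choose_self]
  ring

lemma ep_val_pal (c b : ℕ) (hc : c % 2 = 0) (hb1 : b % 2 = 1) (hb3 : 3 ≤ b) (hb : 2*b ≤ c+2) :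
    ep c b = 2 * 2^((b-3)/2) * Nat.choose ((c-b-1)/2) ((b-3)/2) := by
  rw [ep_eq_sum_pal c b ((c-b-1)/2) ((c+2-2*b)/2) (by omega) (by omega), ep_sum_val,
    show (c-b-1)/2 - (c+2-2*b)/2 = (b-3)/2 from by omega,
    show (c+2-2*b)/2 = (c-b-1)/2 - (b-3)/2 from by omega,
    Nat.choose_symm (by omega)]

lemma ep_val_anti (c b : ℕ) (hc : c % 2 = 1) (hb1 : b % 2 = 0) (hb3 : 3 ≤ b) (hb : 2*b ≤ c+2) :
    ep c b = 2 * 2^((b-2)/2) * Nat.choose ((c-b-1)/2) ((b-2)/2) := by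
  rw [ep_eq_sum_anti c b ((c-b-1)/2) ((c+1-2*b)/2) (by omega) (by omega), ep_sum_val,
    show (c-b-1)/2 - (c+1-2*b)/2 = (b-2)/2 from by omega,
    show (c+1-2*b)/2 = (c-b-1)/2 - (b-2)/2 from by omega,
    Nat.choose_symm (by omega)]

lemma ep_zero_oddS (c b : ℕ) (hb2 : 2 ≤ b) (hb : 2*b ≤ c+2) (hpar : (c+b) % 2 = 0) :
    ep c b = 0 := by
  rw [ep, Eset_pal_empty c b (c-b) (c+2-2*b) (by omega) (by omega) ?_, Set.ncard_empty]
  rw [Nat.even_iff]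
  omega

theorem numKnots_closed_formula (c b : ℕ) :
    numKnots c b =
      if 3 ≤ c ∧ Odd c ∧ b = 2 then 1
      else if 3 ≤ c ∧ 3 ≤ b ∧ b ≤ (c + 2) / 2 ∧ Even (c + b) then
        (2 : ℚ) ^ ((b : ℤ) - 4) * (Nat.choose (c - b) (b - 2) : ℚ)
      else if 3 ≤ c ∧ 3 ≤ b ∧ b ≤ (c + 2) / 2 ∧ Even c ∧ Odd b then
        (2 : ℚ) ^ ((b : ℤ) - 4) * (Nat.choose (c - b) (b - 2) : ℚ)
          + (2 : ℚ) ^ (((b : ℤ) - 5) / 2) * (Nat.choose ((c - b - 1) / 2) ((b - 3) / 2) : ℚ)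
      else if 3 ≤ c ∧ 3 ≤ b ∧ b ≤ (c + 2) / 2 ∧ Odd c ∧ Even b then
        (2 : ℚ) ^ ((b : ℤ) - 4) * (Nat.choose (c - b) (b - 2) : ℚ)
          + (2 : ℚ) ^ (((b : ℤ) - 4) / 2) * (Nat.choose ((c - b - 1) / 2) ((b - 2) / 2) : ℚ)
      else 0 := by
  have h2ne : (2:ℚ) ≠ 0 := by norm_num
  by_cases h1 : 3 ≤ c ∧ Odd c ∧ b = 2
  · rw [if_pos h1]
    obtain ⟨hc, hodd, rfl⟩ := h1
    rw [Nat.odd_iff] at hodd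
    rw [numKnots, e_val_b2 c hc, if_pos (by rw [Nat.odd_iff]; omega), ep_val_case1 c hc hodd]
    norm_num
  · rw [if_neg h1]
    by_cases h2 : 3 ≤ c ∧ 3 ≤ b ∧ b ≤ (c + 2) / 2 ∧ Even (c + b)
    · rw [if_pos h2]
      obtain ⟨hc, hb3, hbu, hpar⟩ := h2
      rw [Nat.even_iff] at hpar
      have hb : 2*b ≤ c + 2 := by omega
      have hzp : (2:ℚ) ^ ((b : ℤ) - 4) = 2^(b-2) / 4 := by
        rw [show (b:ℤ) - 4 = ((b-2 : ℕ) : ℤ) + (-2) from by push_cast [Nat.cast_sub (by omega : 2 ≤ b)]; ring,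
          zpow_add₀ h2ne, zpow_natCast]
        norm_num
        ring
      rw [numKnots, e_val_main c b hb3 hb, ep_zero_oddS c b (by omega) hb hpar, hzp]
      push_cast
      ring
    · rw [if_neg h2]
      by_cases h3 : 3 ≤ c ∧ 3 ≤ b ∧ b ≤ (c + 2) / 2 ∧ Even c ∧ Odd b
      · rw [if_pos h3]
        obtain ⟨hc, hb3, hbu, hce, hbo⟩ := h3
        rw [Nat.even_iff] at hce
        rw [Nat.odd_iff] at hbo
        have hb : 2*b ≤ c + 2 := by omega
        have hzp : (2:ℚ) ^ ((b : ℤ) - 4) = 2^(b-2) / 4 := by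
          rw [show (b:ℤ) - 4 = ((b-2 : ℕ) : ℤ) + (-2) from by push_cast [Nat.cast_sub (by omega : 2 ≤ b)]; ring,
            zpow_add₀ h2ne, zpow_natCast]
          norm_num
          ring
        have hzp2 : (2:ℚ) ^ (((b : ℤ) - 5) / 2) = 2^((b-3)/2) / 2 := by
          rw [show ((b:ℤ) - 5) / 2 = (((b-3)/2 : ℕ) : ℤ) + (-1) from by omega,
            zpow_add₀ h2ne, zpow_natCast]
          norm_num
          ring
        rw [numKnots, e_val_main c b hb3 hb, ep_val_pal c b hce hbo hb3 hb, hzp, hzp2]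
        push_cast
        ring
      · rw [if_neg h3]
        by_cases h4 : 3 ≤ c ∧ 3 ≤ b ∧ b ≤ (c + 2) / 2 ∧ Odd c ∧ Even b
        · rw [if_pos h4]
          obtain ⟨hc, hb3, hbu, hco, hbe⟩ := h4
          rw [Nat.odd_iff] at hco
          rw [Nat.even_iff] at hbe
          have hb : 2*b ≤ c + 2 := by omega
          have hzp : (2:ℚ) ^ ((b : ℤ) - 4) = 2^(b-2) / 4 := by
            rw [show (b:ℤ) - 4 = ((b-2 : ℕ) : ℤ) + (-2) from by push_cast [Nat.cast_sub (by omega : 2 ≤ b)]; ring,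
              zpow_add₀ h2ne, zpow_natCast]
            norm_num
            ring
          have hzp2 : (2:ℚ) ^ (((b : ℤ) - 4) / 2) = 2^((b-2)/2) / 2 := by
            rw [show ((b:ℤ) - 4) / 2 = (((b-2)/2 : ℕ) : ℤ) + (-1) from by omega,
              zpow_add₀ h2ne, zpow_natCast]
            norm_num
            ring
          rw [numKnots, e_val_main c b hb3 hb, ep_val_anti c b hco hbe hb3 hb, hzp, hzp2]
          push_cast
          ring
        · rw [if_neg h4]
          simp only [Nat.odd_iff, Nat.even_iff, not_and, not_le] at h1 h2 h3 h4
          by_cases hin : 2 ≤ b ∧ 2*b ≤ c+2 ∧ 3 ≤ c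
          · -- must be b = 2 and c even
            have hb2 : b = 2 ∧ c % 2 = 0 := by
              rcases Nat.lt_or_ge b 3 with hb | hb
              · constructor
                · omega
                · by_contra hco
                  exact h1 hin.2.2 (by omega) (by omega)
              · exfalso
                have hbu : b ≤ (c+2)/2 := by omega
                rcases Nat.even_or_odd (c+b) with hp | hp
                · rw [Nat.even_iff] at hp
                  exact absurd hp (h2 hin.2.2 hb hbu)
                · rw [Nat.odd_iff] at hp
                  rcases Nat.even_or_odd c with hce | hco
                  · rw [Nat.even_iff] at hce
                    exact absurd (by omega) (h3 hin.2.2 hb hbu hce)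
                  · rw [Nat.odd_iff] at hco
                    exact absurd (by omega) (h4 hin.2.2 hb hbu hco)
            obtain ⟨rfl, hce⟩ := hb2
            rw [numKnots, e_val_b2 c hin.2.2, if_neg (by rw [Nat.odd_iff]; omega),
              ep_zero_oddS c 2 (by omega) (by omega) (by omega)]
            norm_num
          · rw [numKnots, e, ep, Eset_empty (by omega : b ≤ 1 ∨ c + 3 ≤ 2*b ∨ c ≤ 2)]
            simp
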